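/- In the parallel execution of ARC and OPT, after phase P(0) (i.e., once ARC's cache is full), every eviction from ARC's directory is the result of an ARC miss and removes either LRU(L₁) or LRU(L₂); moreover the evicted page is never an element of L₁' or of L₂'. -/

import Mathlib

abbrev Page := ℕ

/-- A valid offline demand-paging execution with cache size `N` on request
sequence `σ`, starting from the empty cache. `C i` is the cache just before
serving request `i` (so `C (i+1)` is the cache just after serving it).
Demand paging: on a hit the cache is unchanged; on a fault only the requested
page may be brought in. -/
def OptExec (N : ℕ) (σ : List Page) (C : ℕ → Finset Page) : Prop :=
  C 0 = ∅ ∧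
  (∀ i, (C i).card ≤ N) ∧
  ∀ i, i < σ.length →
    σ.getD i 0 ∈ C (i + 1) ∧
    C (i + 1) ⊆ C i ∪ {σ.getD i 0} ∧
    (σ.getD i 0 ∈ C i → C (i + 1) = C i)

/-- Number of page faults incurred by an offline execution `C` on `σ`. -/
def optFaults (σ : List Page) (C : ℕ → Finset Page) : ℕ :=
  ((List.range σ.length).filter (fun i => decide (σ.getD i 0 ∉ C i))).length

/-- The fault count of an optimal offline demand-paging algorithm (OPT)
with cache size `N` on `σ`. -/
noncomputable def optCost (N : ℕ) (σ : List Page) : ℕ :=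
  sInf {k | ∃ C, OptExec N σ C ∧ optFaults σ C = k}

/-- The state of the ARC cache: main lists `T1`, `T2` and history lists
`B1`, `B2` (each kept in recency order, MRU at the head, LRU at the end),
together with the adaptive parameter `p`. -/
structure ArcState where
  T1 : List Page
  T2 : List Page
  B1 : List Page
  B2 : List Page
  p  : ℕ

/-- ARC starts with empty lists and `p = 0`. -/
def ArcState.init : ArcState := ⟨[], [], [], [], 0⟩

/-- ARC's subroutine REPLACE: demote `LRU(T1)` to the MRU position of `B1`
if `|T1| ≥ 1` and either (the requested page was in `B2` and `|T1| = p`) or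
`|T1| > p`; otherwise demote `LRU(T2)` to the MRU position of `B2`. -/
def arcReplace (xInB2 : Bool) (s : ArcState) : ArcState :=
  if 1 ≤ s.T1.length ∧ ((xInB2 = true ∧ s.T1.length = s.p) ∨ s.p < s.T1.length) then
    { s with T1 := s.T1.dropLast, B1 := s.T1.getLast?.toList ++ s.B1 }
  else
    { s with T2 := s.T2.dropLast, B2 := s.T2.getLast?.toList ++ s.B2 }

/-- One step of ARC (cache size `N`, with the ±1 adaptation rule) on a
requested page `x`. -/
def arcStep (N : ℕ) (s : ArcState) (x : Page) : ArcState :=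
  if x ∈ s.T1 ∨ x ∈ s.T2 then
    -- cache hit: move `x` to the MRU position of `T2`
    { s with T1 := s.T1.erase x, T2 := x :: s.T2.erase x }
  else if x ∈ s.B1 then
    -- history hit in B1: adapt `p := min (p+1) N`, REPLACE, move `x` to MRU(T2)
    let s2 := arcReplace false { s with p := min (s.p + 1) N }
    { s2 with B1 := s2.B1.erase x, T2 := x :: s2.T2 }
  else if x ∈ s.B2 then
    -- history hit in B2: adapt `p := max (p-1) 0`, REPLACE, move `x` to MRU(T2)
    let s2 := arcReplace true { s with p := s.p - 1 }
    { s2 with B2 := s2.B2.erase x, T2 := x :: s2.T2 }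
  else
    -- cache and directory miss
    let s2 :=
      if s.T1.length + s.B1.length = N then
        if s.T1.length < N then
          arcReplace false { s with B1 := s.B1.dropLast }
        else
          { s with T1 := s.T1.dropLast }
      else if s.T1.length + s.B1.length < N ∧
          N ≤ s.T1.length + s.T2.length + s.B1.length + s.B2.length then
        arcReplace false
          (if s.T1.length + s.T2.length + s.B1.length + s.B2.length = 2 * N then
            { s with B2 := s.B2.dropLast }
          else s)
      else s
    { s2 with T1 := x :: s2.T1 }

/-- Run ARC on a request sequence. -/
def arcRun (N : ℕ) : ArcState → List Page → ArcState
  | s, [] => s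
  | s, x :: xs => arcRun N (arcStep N s x) xs

/-- Number of page faults incurred by ARC on a request sequence. -/
def arcCost (N : ℕ) : ArcState → List Page → ℕ
  | _, [] => 0
  | s, x :: xs => (if x ∈ s.T1 ∨ x ∈ s.T2 then 0 else 1) + arcCost N (arcStep N s x) xs

/-- `t = t₁ + t₂`, the number of pages in ARC's cache. -/
def arcT (s : ArcState) : ℕ := s.T1.length + s.T2.length

/-- `TOP(X)` for a recency-ordered list `X`: the longest prefix (i.e. the
largest set of most-recently-used pages) of `X` all of whose pages are in
OPT's cache `O`; `topLen` is its size. -/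
def topLen (X : List Page) (O : Finset Page) : ℕ :=
  (X.takeWhile (fun q => decide (q ∈ O))).length

/-- `t₁' = |TOP(T1)|`. -/
def arcT1' (s : ArcState) (O : Finset Page) : ℕ := topLen s.T1 O

/-- `t₂' = |TOP(T2)|`. -/
def arcT2' (s : ArcState) (O : Finset Page) : ℕ := topLen s.T2 O

/-- `b₁' = |TOP(L1) ∩ B1|` where `L1 = T1 · B1`. -/
def arcB1' (s : ArcState) (O : Finset Page) : ℕ :=
  (((s.T1 ++ s.B1).takeWhile (fun q => decide (q ∈ O))).filter
    (fun q => decide (q ∈ s.B1))).length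

/-- `b₂' = |TOP(L2) ∩ B2|` where `L2 = T2 · B2`. -/
def arcB2' (s : ArcState) (O : Finset Page) : ℕ :=
  (((s.T2 ++ s.B2).takeWhile (fun q => decide (q ∈ O))).filter
    (fun q => decide (q ∈ s.B2))).length

/-- The potential `Φ = p − [(b₁'−t) + 2(t₁'−t) + 3(b₂'−t) + 4(t₂'−t)]`
with the value `t` supplied explicitly. -/
def arcPhiAt (s : ArcState) (O : Finset Page) (t : ℤ) : ℤ :=
  (s.p : ℤ) - (((arcB1' s O : ℤ) - t) + 2 * ((arcT1' s O : ℤ) - t)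
    + 3 * ((arcB2' s O : ℤ) - t) + 4 * ((arcT2' s O : ℤ) - t))

/-- The potential `Φ = p − [(b₁'−t) + 2(t₁'−t) + 3(b₂'−t) + 4(t₂'−t)]`. -/
def arcPhi (s : ArcState) (O : Finset Page) : ℤ :=
  arcPhiAt s O (arcT s)

/-- ARC's cache directory: all pages it tracks. -/
def arcDir (s : ArcState) : List Page := s.T1 ++ s.T2 ++ s.B1 ++ s.B2


private lemma dl_append (l : List Page) : l.dropLast ++ l.getLast?.toList = l := by
  rcases l.eq_nil_or_concat with rfl | ⟨l', a, rfl⟩ <;> simp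

private lemma count_dl (a : Page) (l : List Page) :
    l.dropLast.count a + l.getLast?.toList.count a = l.count a := by
  conv_rhs => rw [← dl_append l]
  rw [List.count_append]

private lemma getLast?_eq_of_not_mem_dropLast {q : Page} {l : List Page}
    (h1 : q ∈ l) (h2 : q ∉ l.dropLast) : l.getLast? = some q := by
  rcases l.eq_nil_or_concat with rfl | ⟨l', a, rfl⟩
  · simp at h1
  · simp only [List.concat_eq_append] at h1 h2 ⊢
    rw [List.dropLast_concat] at h2
    rw [List.getLast?_concat]
    rcases List.mem_append.1 h1 with h | h
    · exact absurd h h2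
    · simp only [List.mem_singleton] at h
      simp [h]

private lemma all_of_getLast_mem_takeWhile {p : Page → Bool} {l : List Page} {q : Page}
    (hnd : l.Nodup) (hlast : l.getLast? = some q) (hmem : q ∈ l.takeWhile p) :
    ∀ r ∈ l, p r = true := by
  by_cases hd : l.dropWhile p = []
  · intro r hr
    have heq : l.takeWhile p = l := by
      conv_rhs => rw [← List.takeWhile_append_dropWhile (p := p) (l := l)]
      rw [hd, List.append_nil]
    exact List.mem_takeWhile_imp (heq ▸ hr)
  · exfalso
    have hq2 : q ∈ l.dropWhile p := by
      have h1 : (l.takeWhile p ++ l.dropWhile p).getLast? = some q := by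
        rw [List.takeWhile_append_dropWhile]; exact hlast
      rw [List.getLast?_append_of_ne_nil _ hd] at h1
      exact List.mem_of_getLast? h1
    have hnd' : (l.takeWhile p ++ l.dropWhile p).Nodup := by
      rw [List.takeWhile_append_dropWhile]; exact hnd
    exact List.disjoint_of_nodup_append hnd' hmem hq2

private lemma count_replace (b : Bool) (s : ArcState) (a : Page) :
    (arcReplace b s).T1.count a + (arcReplace b s).B1.count a
        = s.T1.count a + s.B1.count a ∧
    (arcReplace b s).T2.count a + (arcReplace b s).B2.count a
        = s.T2.count a + s.B2.count a ∧
    (arcReplace b s).T1.count a ≤ s.T1.count a ∧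
    (arcReplace b s).T2.count a ≤ s.T2.count a ∧
    s.B1.count a ≤ (arcReplace b s).B1.count a ∧
    s.B2.count a ≤ (arcReplace b s).B2.count a := by
  have h1 := count_dl a s.T1
  have h2 := count_dl a s.T2
  unfold arcReplace
  split <;> simp [List.count_append] <;> omega

private lemma nodup_dir_step (N : ℕ) (s : ArcState) (x : Page)
    (h : (arcDir s).Nodup) : (arcDir (arcStep N s x)).Nodup := by
  have hc : ∀ a, s.T1.count a + s.T2.count a + s.B1.count a + s.B2.count a ≤ 1 := by
    intro a
    have := List.nodup_iff_count_le_one.1 h a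
    simp only [arcDir, List.count_append] at this
    omega
  rw [List.nodup_iff_count_le_one]
  intro a
  by_cases h1 : x ∈ s.T1 ∨ x ∈ s.T2
  · have hstep : arcStep N s x = { s with T1 := s.T1.erase x, T2 := x :: s.T2.erase x } := by
      simp [arcStep, h1]
    have hx : 1 ≤ s.T1.count x + s.T2.count x := by
      rcases h1 with h' | h' <;> have := List.count_pos_iff.2 h' <;> omega
    have hca := hc a
    have hcx := hc x
    rw [hstep]
    rcases eq_or_ne x a with rfl | hax
    · simp [arcDir, List.count_append, List.count_cons, List.count_erase]
      omega
    · simp [arcDir, List.count_append, List.count_cons, List.count_erase, hax]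
      omega
  · by_cases h2 : x ∈ s.B1
    · set r := arcReplace false { s with p := min (s.p + 1) N } with hrdef
      have hstep : arcStep N s x = { r with B1 := r.B1.erase x, T2 := x :: r.T2 } := by
        simp [arcStep, h1, h2, hrdef]
      have hrep := count_replace false { s with p := min (s.p + 1) N } a
      have hrepx := count_replace false { s with p := min (s.p + 1) N } x
      rw [← hrdef] at hrep hrepx
      simp only [] at hrep hrepx
      have hbx : 1 ≤ s.B1.count x := List.count_pos_iff.2 h2
      have hca := hc a
      have hcx := hc x
      rw [hstep]
      rcases eq_or_ne x a with rfl | hax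
      · simp [arcDir, List.count_append, List.count_cons, List.count_erase]
        omega
      · simp [arcDir, List.count_append, List.count_cons, List.count_erase, hax]
        omega
    · by_cases h3 : x ∈ s.B2
      · set r := arcReplace true { s with p := s.p - 1 } with hrdef
        have hstep : arcStep N s x = { r with B2 := r.B2.erase x, T2 := x :: r.T2 } := by
          simp [arcStep, h1, h2, h3, hrdef]
        have hrep := count_replace true { s with p := s.p - 1 } a
        have hrepx := count_replace true { s with p := s.p - 1 } x
        rw [← hrdef] at hrep hrepx
        simp only [] at hrep hrepx
        have hbx : 1 ≤ s.B2.count x := List.count_pos_iff.2 h3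
        have hca := hc a
        have hcx := hc x
        rw [hstep]
        rcases eq_or_ne x a with rfl | hax
        · simp [arcDir, List.count_append, List.count_cons, List.count_erase]
          omega
        · simp [arcDir, List.count_append, List.count_cons, List.count_erase, hax]
          omega
      · -- full miss
        have hx1 : s.T1.count x = 0 := List.count_eq_zero.2 (fun hmem => h1 (Or.inl hmem))
        have hx2 : s.T2.count x = 0 := List.count_eq_zero.2 (fun hmem => h1 (Or.inr hmem))
        have hx3 : s.B1.count x = 0 := List.count_eq_zero.2 h2
        have hx4 : s.B2.count x = 0 := List.count_eq_zero.2 h3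
        have hca := hc a
        have hd1 := count_dl a s.T1
        have hd2 := count_dl a s.B1
        have hd3 := count_dl a s.B2
        by_cases hA : s.T1.length + s.B1.length = N
        · by_cases hA1 : s.T1.length < N
          · set r := arcReplace false { s with B1 := s.B1.dropLast } with hrdef
            have hstep : arcStep N s x = { r with T1 := x :: r.T1 } := by
              simp [arcStep, h1, h2, h3, hA, hA1, hrdef]
            have hrep := count_replace false { s with B1 := s.B1.dropLast } a
            rw [← hrdef] at hrep
            simp only [] at hrep
            have hd2' := count_dl x s.B1
            have hrepx := count_replace false { s with B1 := s.B1.dropLast } x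
            rw [← hrdef] at hrepx
            simp only [] at hrepx
            rw [hstep]
            rcases eq_or_ne x a with rfl | hax
            · simp [arcDir, List.count_append, List.count_cons]
              omega
            · simp [arcDir, List.count_append, List.count_cons, hax]
              omega
          · have hstep : arcStep N s x = { s with T1 := x :: s.T1.dropLast } := by
              simp [arcStep, h1, h2, h3, hA, hA1]
            have hd1' := count_dl x s.T1
            rw [hstep]
            rcases eq_or_ne x a with rfl | hax
            · simp [arcDir, List.count_append, List.count_cons]
              omega
            · simp [arcDir, List.count_append, List.count_cons, hax]
              omega
        · by_cases hB : s.T1.length + s.B1.length < N ∧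
              N ≤ s.T1.length + s.T2.length + s.B1.length + s.B2.length
          · by_cases hB2 : s.T1.length + s.T2.length + s.B1.length + s.B2.length = 2 * N
            · set r := arcReplace false { s with B2 := s.B2.dropLast } with hrdef
              have hstep : arcStep N s x = { r with T1 := x :: r.T1 } := by
                simp [arcStep, h1, h2, h3, hA, hB, hB2, hrdef, (by omega : N ≤ 2 * N)]
              have hrep := count_replace false { s with B2 := s.B2.dropLast } a
              rw [← hrdef] at hrep
              simp only [] at hrep
              have hd3' := count_dl x s.B2
              have hrepx := count_replace false { s with B2 := s.B2.dropLast } x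
              rw [← hrdef] at hrepx
              simp only [] at hrepx
              rw [hstep]
              rcases eq_or_ne x a with rfl | hax
              · simp [arcDir, List.count_append, List.count_cons]
                omega
              · simp [arcDir, List.count_append, List.count_cons, hax]
                omega
            · set r := arcReplace false s with hrdef
              have hstep : arcStep N s x = { r with T1 := x :: r.T1 } := by
                simp [arcStep, h1, h2, h3, hA, hB, hB2, hrdef, (by omega : N ≤ 2 * N)]
              have hrep := count_replace false s a
              rw [← hrdef] at hrep
              have hrepx := count_replace false s x
              rw [← hrdef] at hrepx
              rw [hstep]
              rcases eq_or_ne x a with rfl | hax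
              · simp [arcDir, List.count_append, List.count_cons]
                omega
              · simp [arcDir, List.count_append, List.count_cons, hax]
                omega
          · have hstep : arcStep N s x = { s with T1 := x :: s.T1 } := by
              simp [arcStep, h1, h2, h3, hA, hB]
            rw [hstep]
            rcases eq_or_ne x a with rfl | hax
            · simp [arcDir, List.count_append, List.count_cons]
              omega
            · simp [arcDir, List.count_append, List.count_cons, hax]
              omega

private lemma nodup_dir_run (N : ℕ) :
    ∀ (l : List Page) (s : ArcState),
      (arcDir s).Nodup → (arcDir (arcRun N s l)).Nodup
  | [], _, h => h
  | x :: xs, s, h => nodup_dir_run N xs (arcStep N s x) (nodup_dir_step N s x h)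

/-- Lemma `lem:c`. In the parallel execution of ARC and OPT,
after phase `P(0)` (i.e. once ARC has incurred at least `N` faults), every
page `q` evicted from ARC's directory while serving `σ_j` is evicted as the
result of an ARC miss and is either `LRU(L1)` or `LRU(L2)`; moreover the
evicted page belongs neither to `L1' = TOP(L1)` nor to `L2' = TOP(L2)`. -/
theorem arc_eviction_lemma (N : ℕ) (σ : List Page) (C : ℕ → Finset Page)
    (hC : OptExec N σ C) (hCopt : optFaults σ C = optCost N σ)
    (j : ℕ) (hj : j < σ.length)
    (hphase : N ≤ arcCost N ArcState.init (σ.take j))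
    (s : ArcState) (hs : s = arcRun N ArcState.init (σ.take j))
    (q : Page) (hq : q ∈ arcDir s) (hq' : q ∉ arcDir (arcStep N s (σ.getD j 0))) :
    (σ.getD j 0 ∉ s.T1 ∧ σ.getD j 0 ∉ s.T2) ∧
    ((s.T1 ++ s.B1).getLast? = some q ∨ (s.T2 ++ s.B2).getLast? = some q) ∧
    q ∉ (s.T1 ++ s.B1).takeWhile (fun r => decide (r ∈ C (j + 1))) ∧
    q ∉ (s.T2 ++ s.B2).takeWhile (fun r => decide (r ∈ C (j + 1))) := by
  
  have hnd : (arcDir s).Nodup := by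
    rw [hs]
    exact nodup_dir_run N (σ.take j) ArcState.init (by simp [ArcState.init, arcDir])
  clear hs hphase hCopt
  set x := σ.getD j 0 with hxdef
  obtain ⟨-, hCcard, hCstep⟩ := hC
  have hxC : x ∈ C (j + 1) := (hCstep j hj).1
  have hcard : (C (j + 1)).card ≤ N := hCcard (j + 1)
  clear hCstep hj
  have hcnt : ∀ a, s.T1.count a + s.T2.count a + s.B1.count a + s.B2.count a ≤ 1 := by
    intro a
    have := List.nodup_iff_count_le_one.1 hnd a
    simp only [arcDir, List.count_append] at this
    omega
  have hq1 : 1 ≤ s.T1.count q + s.T2.count q + s.B1.count q + s.B2.count q := by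
    have := List.count_pos_iff.2 hq
    simp only [arcDir, List.count_append] at this
    omega
  have hq0 : (arcDir (arcStep N s x)).count q = 0 := List.count_eq_zero.2 hq'
  have hcq := hcnt q
  by_cases h1 : x ∈ s.T1 ∨ x ∈ s.T2
  · exfalso
    have hstep : arcStep N s x = { s with T1 := s.T1.erase x, T2 := x :: s.T2.erase x } := by
      simp [arcStep, h1]
    have hx : 1 ≤ s.T1.count x + s.T2.count x := by
      rcases h1 with h' | h' <;> have := List.count_pos_iff.2 h' <;> omega
    rw [hstep] at hq0
    rcases eq_or_ne q x with rfl | hqx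
    · simp [arcDir, List.count_append, List.count_cons, List.count_erase] at hq0
    · simp [arcDir, List.count_append, List.count_cons, List.count_erase, hqx, hqx.symm] at hq0
      omega
  · by_cases h2 : x ∈ s.B1
    · exfalso
      set r := arcReplace false { s with p := min (s.p + 1) N } with hrdef
      have hstep : arcStep N s x = { r with B1 := r.B1.erase x, T2 := x :: r.T2 } := by
        simp [arcStep, h1, h2, hrdef]
      have hrep := count_replace false { s with p := min (s.p + 1) N } q
      rw [← hrdef] at hrep
      simp only [] at hrep
      have hbx : 1 ≤ s.B1.count x := List.count_pos_iff.2 h2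
      rw [hstep] at hq0
      rcases eq_or_ne q x with rfl | hqx
      · simp [arcDir, List.count_append, List.count_cons, List.count_erase] at hq0
      · simp [arcDir, List.count_append, List.count_cons, List.count_erase, hqx, hqx.symm] at hq0
        omega
    · by_cases h3 : x ∈ s.B2
      · exfalso
        set r := arcReplace true { s with p := s.p - 1 } with hrdef
        have hstep : arcStep N s x = { r with B2 := r.B2.erase x, T2 := x :: r.T2 } := by
          simp [arcStep, h1, h2, h3, hrdef]
        have hrep := count_replace true { s with p := s.p - 1 } q
        rw [← hrdef] at hrep
        simp only [] at hrep
        have hbx : 1 ≤ s.B2.count x := List.count_pos_iff.2 h3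
        rw [hstep] at hq0
        rcases eq_or_ne q x with rfl | hqx
        · simp [arcDir, List.count_append, List.count_cons, List.count_erase] at hq0
        · simp [arcDir, List.count_append, List.count_cons, List.count_erase, hqx, hqx.symm] at hq0
          omega
      · -- full miss
        have hm1a : x ∉ s.T1 := fun hmem => h1 (Or.inl hmem)
        have hm1b : x ∉ s.T2 := fun hmem => h1 (Or.inr hmem)
        have hndL1 : (s.T1 ++ s.B1).Nodup := by
          rw [List.nodup_iff_count_le_one]
          intro a
          have := hcnt a
          rw [List.count_append]
          omega
        have hndL2 : (s.T2 ++ s.B2).Nodup := by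
          rw [List.nodup_iff_count_le_one]
          intro a
          have := hcnt a
          rw [List.count_append]
          omega
        refine ⟨⟨hm1a, hm1b⟩, ?_⟩
        by_cases hA : s.T1.length + s.B1.length = N
        · -- the evicted page is LRU(L1)
          have hlast : s.B1.getLast? = some q ∨ (s.B1 = [] ∧ s.T1.getLast? = some q) := by
            by_cases hA1 : s.T1.length < N
            · set r := arcReplace false { s with B1 := s.B1.dropLast } with hrdef
              have hstep : arcStep N s x = { r with T1 := x :: r.T1 } := by
                simp [arcStep, h1, h2, h3, hA, hA1, hrdef]
              have hrep := count_replace false { s with B1 := s.B1.dropLast } q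
              rw [← hrdef] at hrep
              simp only [] at hrep
              have hd2 := count_dl q s.B1
              rw [hstep] at hq0
              rcases eq_or_ne q x with rfl | hqx
              · simp [arcDir, List.count_append, List.count_cons] at hq0
              · simp [arcDir, List.count_append, List.count_cons, hqx, hqx.symm] at hq0
                left
                refine getLast?_eq_of_not_mem_dropLast ?_ ?_
                · rw [← List.count_pos_iff]
                  omega
                · rw [← List.count_eq_zero]
                  omega
            · have hB1nil : s.B1 = [] := by
                rw [← List.length_eq_zero_iff]
                omega
              have hstep : arcStep N s x = { s with T1 := x :: s.T1.dropLast } := by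
                simp [arcStep, h1, h2, h3, hA, hA1]
              have hd1 := count_dl q s.T1
              rw [hstep] at hq0
              rcases eq_or_ne q x with rfl | hqx
              · simp [arcDir, List.count_append, List.count_cons] at hq0
              · simp [arcDir, List.count_append, List.count_cons, hqx, hqx.symm] at hq0
                right
                refine ⟨hB1nil, getLast?_eq_of_not_mem_dropLast ?_ ?_⟩
                · rw [← List.count_pos_iff]
                  have : s.B1.count q = 0 := by rw [hB1nil]; simp
                  omega
                · rw [← List.count_eq_zero]
                  omega
          have hlastL1 : (s.T1 ++ s.B1).getLast? = some q := by
            rcases hlast with h | ⟨hnil, h⟩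
            · have hne : s.B1 ≠ [] := by
                intro hn
                rw [hn] at h
                simp at h
              rw [List.getLast?_append_of_ne_nil _ hne]
              exact h
            · rw [hnil, List.append_nil]
              exact h
          have hqL1 : q ∈ s.T1 ++ s.B1 := List.mem_of_getLast? hlastL1
          have hqnotL2 : q ∉ s.T2 ++ s.B2 := by
            intro hmem
            have hp1 := List.count_pos_iff.2 hqL1
            have hp2 := List.count_pos_iff.2 hmem
            rw [List.count_append] at hp1 hp2
            omega
          refine ⟨Or.inl hlastL1, ?_, ?_⟩
          · -- q not in TOP(L1): otherwise all N pages of L1 plus x are in OPT's cache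
            intro hmem
            have hall := all_of_getLast_mem_takeWhile hndL1 hlastL1 hmem
            have hsub : insert x (s.T1 ++ s.B1).toFinset ⊆ C (j + 1) := by
              intro r hr
              rcases Finset.mem_insert.1 hr with rfl | hr
              · exact hxC
              · exact of_decide_eq_true (hall r (List.mem_toFinset.1 hr))
            have hxni : x ∉ (s.T1 ++ s.B1).toFinset := by
              simp only [List.mem_toFinset, List.mem_append]
              rintro (h | h)
              · exact hm1a h
              · exact h2 h
            have hle := Finset.card_le_card hsub
            rw [Finset.card_insert_of_notMem hxni, List.toFinset_card_of_nodup hndL1,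
              List.length_append] at hle
            omega
          · intro hmem
            exact hqnotL2 ((List.takeWhile_prefix _).subset hmem)
        · by_cases hB : s.T1.length + s.B1.length < N ∧
              N ≤ s.T1.length + s.T2.length + s.B1.length + s.B2.length
          · by_cases hB2 : s.T1.length + s.T2.length + s.B1.length + s.B2.length = 2 * N
            · -- the evicted page is LRU(L2)
              set r := arcReplace false { s with B2 := s.B2.dropLast } with hrdef
              have hstep : arcStep N s x = { r with T1 := x :: r.T1 } := by
                simp [arcStep, h1, h2, h3, hA, hB, hB2, hrdef, (by omega : N ≤ 2 * N)]
              have hrep := count_replace false { s with B2 := s.B2.dropLast } q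
              rw [← hrdef] at hrep
              simp only [] at hrep
              have hd3 := count_dl q s.B2
              rw [hstep] at hq0
              rcases eq_or_ne q x with rfl | hqx
              · simp [arcDir, List.count_append, List.count_cons] at hq0
              · simp [arcDir, List.count_append, List.count_cons, hqx, hqx.symm] at hq0
                have hlast : s.B2.getLast? = some q := by
                  refine getLast?_eq_of_not_mem_dropLast ?_ ?_
                  · rw [← List.count_pos_iff]
                    omega
                  · rw [← List.count_eq_zero]
                    omega
                have hne : s.B2 ≠ [] := by
                  intro hn
                  rw [hn] at hlast
                  simp at hlast
                have hlastL2 : (s.T2 ++ s.B2).getLast? = some q := by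
                  rw [List.getLast?_append_of_ne_nil _ hne]
                  exact hlast
                have hqL2 : q ∈ s.T2 ++ s.B2 := List.mem_of_getLast? hlastL2
                have hqnotL1 : q ∉ s.T1 ++ s.B1 := by
                  intro hmem
                  have hp1 := List.count_pos_iff.2 hqL2
                  have hp2 := List.count_pos_iff.2 hmem
                  rw [List.count_append] at hp1 hp2
                  omega
                refine ⟨Or.inr hlastL2, ?_, ?_⟩
                · intro hmem
                  exact hqnotL1 ((List.takeWhile_prefix _).subset hmem)
                · -- q not in TOP(L2): otherwise the > N pages of L2 are all in OPT's cache
                  intro hmem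
                  have hall := all_of_getLast_mem_takeWhile hndL2 hlastL2 hmem
                  have hsub : (s.T2 ++ s.B2).toFinset ⊆ C (j + 1) := by
                    intro r hr
                    exact of_decide_eq_true (hall r (List.mem_toFinset.1 hr))
                  have hle := Finset.card_le_card hsub
                  rw [List.toFinset_card_of_nodup hndL2, List.length_append] at hle
                  omega
            · exfalso
              set r := arcReplace false s with hrdef
              have hstep : arcStep N s x = { r with T1 := x :: r.T1 } := by
                simp [arcStep, h1, h2, h3, hA, hB, hB2, hrdef, (by omega : N ≤ 2 * N)]
              have hrep := count_replace false s q
              rw [← hrdef] at hrep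
              rw [hstep] at hq0
              rcases eq_or_ne q x with rfl | hqx
              · simp [arcDir, List.count_append, List.count_cons] at hq0
              · simp [arcDir, List.count_append, List.count_cons, hqx, hqx.symm] at hq0
                omega
          · exfalso
            have hstep : arcStep N s x = { s with T1 := x :: s.T1 } := by
              simp [arcStep, h1, h2, h3, hA, hB]
            rw [hstep] at hq0
            rcases eq_or_ne q x with rfl | hqx
            · simp [arcDir, List.count_append, List.count_cons] at hq0
            · simp [arcDir, List.count_append, List.count_cons, hqx, hqx.symm] at hq0
              omega
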